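/- For all integers n ≥ 2 and 1 ≤ m ≤ n(n−1)/2, there exists a weighted digraph G = (V, E, w) with |V| = 2n vertices, |E| = m edges and strictly positive weights, such that for every ε ∈ (0,1) and every predicate P ∈ {nOr, 01, Dicut, And}, every ε-P-sparsifier G_ε = (V, E_ε, w_ε) of G satisfies E_ε = E. (The graph G does not depend on P or ε.) -/

import Mathlib

/-- A two-variable boolean predicate. -/
abbrev Pred := Bool → Bool → Bool

/-- The value `P_G(S)` of a predicate `P` on the weighted digraph `G = (V, E, w)`
for a subset `S ⊆ V`. -/
def predVal {V : Type} [DecidableEq V] (P : Pred) (E : Finset (V × V))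
    (w : V × V → ℝ) (S : Finset V) : ℝ :=
  ∑ e ∈ E, if P (decide (e.1 ∈ S)) (decide (e.2 ∈ S)) then w e else 0

/-- `(Eε, wε)` is an `ε`-`P`-sparsifier of `(E, w)`: a reweighted subgraph with strictly
positive weights whose `P`-value is within factor `(1 ± ε)` of that of `G` on every `S`. -/
def IsSparsifier {V : Type} [DecidableEq V] (P : Pred) (E : Finset (V × V))
    (w : V × V → ℝ) (Eε : Finset (V × V)) (wε : V × V → ℝ) (ε : ℝ) : Prop :=
  Eε ⊆ E ∧ (∀ e ∈ Eε, 0 < wε e) ∧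
    ∀ S : Finset V,
      (1 - ε) * predVal P E w S ≤ predVal P Eε wε S ∧
        predVal P Eε wε S ≤ (1 + ε) * predVal P E w S

/-- `And(x,y) = 1` iff `x = y = 1`. -/
def pAnd : Pred := fun x y => x && y
/-- `nOr(x,y) = 1` iff `x = y = 0`. -/
def pNOr : Pred := fun x y => !(x || y)
/-- `Dicut(x,y) = 1` iff `(x,y) = (1,0)`. -/
def pDicut : Pred := fun x y => x && !y
/-- `01(x,y) = 1` iff `(x,y) = (0,1)`. -/
def p01 : Pred := fun x y => !x && y

/-- If some set `S` isolates the edge `e` (i.e. `e` is the unique edge of `E` on which the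
predicate fires), then every sparsifier must keep `e`. -/
lemma aux_keep {V : Type} [DecidableEq V] (P : Pred) (E : Finset (V × V))
    (Eε : Finset (V × V)) (wε : V × V → ℝ) (ε : ℝ) (hε : ε ∈ Set.Ioo (0:ℝ) 1)
    (hsp : IsSparsifier P E (fun _ => (1:ℝ)) Eε wε ε)
    (e : V × V) (he : e ∈ E) (S : Finset V)
    (hS : ∀ e' ∈ E, (P (decide (e'.1 ∈ S)) (decide (e'.2 ∈ S)) = true ↔ e' = e)) :
    e ∈ Eε := by
  obtain ⟨hsub, hpos, hbound⟩ := hsp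
  by_contra hne
  have h1 : predVal P E (fun _ => (1:ℝ)) S = 1 := by
    unfold predVal
    rw [Finset.sum_eq_single e]
    · rw [if_pos ((hS e he).mpr rfl)]
    · intro e' he' hne'
      exact if_neg (fun hc => hne' ((hS e' he').mp hc))
    · intro h; exact absurd he h
  have h0 : predVal P Eε wε S = 0 := by
    unfold predVal
    refine Finset.sum_eq_zero fun e' he' => ?_
    refine if_neg fun hc => hne ?_
    exact ((hS e' (hsub he')).mp hc) ▸ he'
  have := (hbound S).1
  rw [h1, h0] at this
  nlinarith [hε.2]

/-- For all integers `n ≥ 2` and `1 ≤ m ≤ n(n−1)/2`, there is a weighted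
digraph `G` on `2n` vertices with `m` edges and strictly positive weights such that for
every `ε ∈ (0,1)` and every `P ∈ {nOr, 01, Dicut, And}`, every `ε`-`P`-sparsifier of `G`
keeps all edges (the graph does not depend on `P` or `ε`). -/
theorem stmt7 (n m : ℕ) (hn : 2 ≤ n) (hm1 : 1 ≤ m) (hm2 : m ≤ n * (n - 1) / 2) :
    ∃ (E : Finset (Fin (2 * n) × Fin (2 * n))) (w : Fin (2 * n) × Fin (2 * n) → ℝ),
      E.card = m ∧ (∀ e ∈ E, 0 < w e) ∧
      ∀ ε ∈ Set.Ioo (0 : ℝ) 1, ∀ P ∈ [pNOr, p01, pDicut, pAnd],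
        ∀ (Eε : Finset (Fin (2 * n) × Fin (2 * n))) (wε : Fin (2 * n) × Fin (2 * n) → ℝ),
          IsSparsifier P E w Eε wε ε → Eε = E := by
  set L : Finset (Fin (2*n)) := Finset.univ.filter (fun v : Fin (2*n) => (v:ℕ) < n) with hL
  set R : Finset (Fin (2*n)) := Finset.univ.filter (fun v : Fin (2*n) => n ≤ (v:ℕ)) with hR
  have hLcard : L.card = n := by
    have h : L = Finset.Iio (⟨n, by omega⟩ : Fin (2*n)) := by
      ext x; simp [hL, Fin.lt_def]
    rw [h, Fin.card_Iio]
  have hRcard : R.card = n := by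
    have h : R = Finset.Ici (⟨n, by omega⟩ : Fin (2*n)) := by
      ext x; simp [hR, Fin.le_def]
    rw [h, Fin.card_Ici]
    simp
    omega
  have hcard : m ≤ (L ×ˢ R).card := by
    rw [Finset.card_product, hLcard, hRcard]
    calc m ≤ n * (n-1) / 2 := hm2
      _ ≤ n * (n-1) := Nat.div_le_self _ _
      _ ≤ n * n := Nat.mul_le_mul_left _ (by omega)
  obtain ⟨E, hEsub, hEcard⟩ := Finset.exists_subset_card_eq hcard
  refine ⟨E, fun _ => 1, hEcard, fun e _ => one_pos, ?_⟩
  intro ε hε P hP Eε wε hsp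
  refine Finset.Subset.antisymm hsp.1 ?_
  intro e he
  have hab := Finset.mem_product.mp (hEsub he)
  have ha : (e.1 : ℕ) < n := by
    have := hab.1; rw [hL] at this; simpa using this
  have hb : n ≤ (e.2 : ℕ) := by
    have := hab.2; rw [hR] at this; simpa using this
  have hbounds : ∀ e' ∈ E, (e'.1 : ℕ) < n ∧ n ≤ (e'.2 : ℕ) := by
    intro e' he'
    have h := Finset.mem_product.mp (hEsub he')
    constructor
    · have := h.1; rw [hL] at this; simpa using this
    · have := h.2; rw [hR] at this; simpa using this
  simp only [List.mem_cons, List.not_mem_nil, or_false] at hP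
  rcases hP with rfl | rfl | rfl | rfl
  · -- nOr : take S = univ \ {e.1, e.2}
    refine aux_keep _ E Eε wε ε hε hsp e he (Finset.univ \ {e.1, e.2}) ?_
    intro e' he'
    obtain ⟨hu, hv⟩ := hbounds e' he'
    simp only [pNOr, Finset.mem_sdiff, Finset.mem_univ, Finset.mem_insert,
      Finset.mem_singleton, true_and, decide_eq_true_eq, Bool.not_or,
      Bool.and_eq_true, Bool.not_eq_true', decide_eq_false_iff_not, not_not,
      Prod.ext_iff, Fin.ext_iff]
    omega
  · -- 01 : take S = insert e.2 (L.erase e.1)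
    refine aux_keep _ E Eε wε ε hε hsp e he (insert e.2 (L.erase e.1)) ?_
    intro e' he'
    obtain ⟨hu, hv⟩ := hbounds e' he'
    simp only [p01, Finset.mem_insert, Finset.mem_erase, hL, Finset.mem_filter,
      Finset.mem_univ, true_and, Bool.and_eq_true, Bool.not_eq_true',
      decide_eq_false_iff_not, decide_eq_true_eq, not_or, not_and, ne_eq,
      Prod.ext_iff, Fin.ext_iff]
    omega
  · -- Dicut : take S = insert e.1 (R.erase e.2)
    refine aux_keep _ E Eε wε ε hε hsp e he (insert e.1 (R.erase e.2)) ?_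
    intro e' he'
    obtain ⟨hu, hv⟩ := hbounds e' he'
    simp only [pDicut, Finset.mem_insert, Finset.mem_erase, hR, Finset.mem_filter,
      Finset.mem_univ, true_and, Bool.and_eq_true, Bool.not_eq_true',
      decide_eq_false_iff_not, decide_eq_true_eq, not_or, not_and, ne_eq,
      Prod.ext_iff, Fin.ext_iff]
    omega
  · -- And : take S = {e.1, e.2}
    refine aux_keep _ E Eε wε ε hε hsp e he {e.1, e.2} ?_
    intro e' he'
    obtain ⟨hu, hv⟩ := hbounds e' he'
    simp only [pAnd, Finset.mem_insert, Finset.mem_singleton, Bool.and_eq_true,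
      decide_eq_true_eq, Prod.ext_iff, Fin.ext_iff]
    omega
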